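/- For every nonnegative integer $r$, the $r$-th Schemmel totient function is multiplicative: if $a$ and $b$ are positive integers with $\gcd(a,b)=1$, then $S_r(ab)=S_r(a)\,S_r(b)$. -/
import Mathlib


/-- The `r`-th Schemmel totient function:
`S_r(n) = #{k : 1 ≤ k ≤ n, gcd(k+i,n) = 1 for all 0 ≤ i ≤ r-1}`. -/
def schemmel (r n : ℕ) : ℕ :=
  ((Finset.Icc 1 n).filter (fun k => ∀ i < r, Nat.gcd (k + i) n = 1)).card

lemma prod_isUnit_iff {M N : Type*} [Monoid M] [Monoid N] (p : M × N) :
    IsUnit p ↔ IsUnit p.1 ∧ IsUnit p.2 := by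
  constructor
  · rintro ⟨u, rfl⟩
    exact ⟨⟨⟨u.1.1, u.2.1, congrArg Prod.fst u.3, congrArg Prod.fst u.4⟩, rfl⟩,
           ⟨⟨u.1.2, u.2.2, congrArg Prod.snd u.3, congrArg Prod.snd u.4⟩, rfl⟩⟩
  · rintro ⟨⟨u, hu⟩, ⟨v, hv⟩⟩
    exact ⟨⟨(u.1, v.1), (u.2, v.2), Prod.ext u.3 v.3, Prod.ext u.4 v.4⟩,
      Prod.ext hu hv⟩

lemma schemmel_eq_nat_card (r n : ℕ) (hn : 0 < n) :
    schemmel r n = Nat.card {x : ZMod n // ∀ i < r, IsUnit (x + (i : ℕ))} := by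
  haveI : NeZero n := ⟨hn.ne'⟩
  rw [schemmel, ← Nat.card_eq_finsetCard]
  refine Nat.card_congr ?_
  refine
    { toFun := fun k => ⟨((k : ℕ) : ZMod n), ?_⟩
      invFun := fun x => ⟨if (x : ZMod n) = 0 then n else (x : ZMod n).val, ?_⟩
      left_inv := ?_
      right_inv := ?_ }
  · obtain ⟨k, hk⟩ := k
    simp only [Finset.mem_filter, Finset.mem_Icc] at hk
    intro i hi
    rw [← Nat.cast_add, ZMod.isUnit_iff_coprime]
    exact hk.2 i hi
  · obtain ⟨x, hx⟩ := x
    have hcast : (((if x = 0 then n else x.val) : ℕ) : ZMod n) = x := by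
      split
      · simp [*]
      · exact ZMod.natCast_zmod_val x
    simp only [Finset.mem_filter, Finset.mem_Icc]
    refine ⟨⟨?_, ?_⟩, ?_⟩
    · split
      · exact hn
      · exact Nat.pos_of_ne_zero (fun h => by
          simp_all [ZMod.val_eq_zero] )
    · split
      · exact le_rfl
      · exact (ZMod.val_lt x).le
    · intro i hi
      have h2 : IsUnit ((((if x = 0 then n else x.val) + i : ℕ)) : ZMod n) := by
        rw [Nat.cast_add, hcast]; exact hx i hi
      exact (ZMod.isUnit_iff_coprime _ n).mp h2
  · rintro ⟨k, hk⟩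
    simp only [Finset.mem_filter, Finset.mem_Icc] at hk
    ext
    simp only
    split
    · next h =>
      have : n ∣ k := (ZMod.natCast_eq_zero_iff k n).mp h
      exact (Nat.le_antisymm hk.1.2 (Nat.le_of_dvd (lt_of_lt_of_le Nat.one_pos hk.1.1) this)).symm
    · next h =>
      have hlt : k < n := lt_of_le_of_ne hk.1.2 (fun he => h (by rw [he]; simp))
      exact ZMod.val_cast_of_lt hlt
  · rintro ⟨x, hx⟩
    ext
    simp only
    split
    · simp [*]
    · exact ZMod.natCast_zmod_val x

/-- The Schemmel totient functions are multiplicative: if `gcd(a,b) = 1`,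
then `S_r(ab) = S_r(a)·S_r(b)`. -/
theorem schemmel_multiplicative (r a b : ℕ) (ha : 0 < a) (hb : 0 < b)
    (hab : Nat.gcd a b = 1) :
    schemmel r (a * b) = schemmel r a * schemmel r b := by
  haveI : NeZero a := ⟨ha.ne'⟩
  haveI : NeZero b := ⟨hb.ne'⟩
  rw [schemmel_eq_nat_card r (a*b) (Nat.mul_pos ha hb), schemmel_eq_nat_card r a ha,
    schemmel_eq_nat_card r b hb]
  rw [← Nat.card_prod]
  refine Nat.card_congr ?_
  have e := ZMod.chineseRemainder hab
  have e1 : {x : ZMod (a*b) // ∀ i < r, IsUnit (x + (i:ℕ))} ≃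
      {p : ZMod a × ZMod b // ∀ i < r, IsUnit (p + (i:ℕ))} := by
    refine e.toEquiv.subtypeEquiv fun x => ?_
    constructor
    · intro h i hi
      have := (h i hi).map e.toRingHom
      rwa [map_add, map_natCast] at this
    · intro h i hi
      have := (h i hi).map e.symm.toRingHom
      simp only [RingEquiv.toRingHom_eq_coe, RingEquiv.coe_toEquiv, map_add, map_natCast,
        RingEquiv.coe_toRingHom, RingEquiv.symm_apply_apply] at this
      simpa using this
  have e2 : {p : ZMod a × ZMod b // ∀ i < r, IsUnit (p + (i:ℕ))} ≃
      {p : ZMod a × ZMod b // (∀ i < r, IsUnit (p.1 + (i:ℕ))) ∧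
        (∀ i < r, IsUnit (p.2 + (i:ℕ)))} := by
    refine Equiv.subtypeEquivRight fun p => ?_
    constructor
    · intro h
      constructor
      · intro i hi
        exact ((prod_isUnit_iff _).mp (by simpa using h i hi)).1
      · intro i hi
        exact ((prod_isUnit_iff _).mp (by simpa using h i hi)).2
    · rintro ⟨h1, h2⟩ i hi
      rw [show p + (i:ℕ) = (p.1 + (i:ℕ), p.2 + (i:ℕ)) from Prod.ext (by simp) (by simp)]
      exact (prod_isUnit_iff _).mpr ⟨h1 i hi, h2 i hi⟩
  exact (e1.trans e2).trans
    (Equiv.subtypeProdEquivProd (p := fun x : ZMod a => ∀ i < r, IsUnit (x + (i:ℕ)))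
      (q := fun y : ZMod b => ∀ i < r, IsUnit (y + (i:ℕ))))
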